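/- Let γ > 0 and let φ : ℝ → ℝ be a Schwartz function. Then for all integers l ≥ 0 and m ≥ 0 there is a constant C_{l,m} > 0 such that for all λ > 0 and all t > 0, (1 + t^{2/γ} λ)^l · λ^m · |(d/dλ)^m [φ(λ^{γ/2} t)]| ≤ C_{l,m}. -/

import Mathlib

open Real Finset

lemma decayS (φ : SchwartzMap ℝ ℝ) (n k : ℕ) :
    ∃ C : ℝ, 0 < C ∧ ∀ x : ℝ, (1 + |x|) ^ n * |iteratedDeriv k (⇑φ) x| ≤ C := by
  obtain ⟨C0, hC0, h0⟩ := φ.decay 0 k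
  obtain ⟨Cn, hCn, hn⟩ := φ.decay n k
  refine ⟨2 ^ n * (C0 + Cn), by positivity, fun x => ?_⟩
  have hiter : |iteratedDeriv k (⇑φ) x| = ‖iteratedFDeriv ℝ k (⇑φ) x‖ := by
    rw [norm_iteratedFDeriv_eq_norm_iteratedDeriv, Real.norm_eq_abs]
  have h0' : |iteratedDeriv k (⇑φ) x| ≤ C0 := by
    have := h0 x; rw [pow_zero, one_mul] at this; rw [hiter]; exact this
  have hn' : |x| ^ n * |iteratedDeriv k (⇑φ) x| ≤ Cn := by
    have := hn x; rw [Real.norm_eq_abs] at this; rw [hiter]; exact this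
  have habs : (0:ℝ) ≤ |iteratedDeriv k (⇑φ) x| := abs_nonneg _
  have h1 : (1 + |x|) ^ n ≤ 2 ^ n * (1 + |x| ^ n) := by
    calc (1 + |x|) ^ n ≤ (2 * max 1 |x|) ^ n := by
          apply pow_le_pow_left₀ (by positivity)
          rcases le_total |x| 1 with h | h
          · rw [max_eq_left h]; linarith
          · rw [max_eq_right h]; linarith
      _ = 2 ^ n * (max 1 |x|) ^ n := mul_pow _ _ _
      _ ≤ 2 ^ n * (1 + |x| ^ n) := by
          gcongr
          rcases le_total |x| 1 with h | h
          · rw [max_eq_left h]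
            have := pow_nonneg (abs_nonneg x) n
            simp only [one_pow]; linarith
          · rw [max_eq_right h]
            have := pow_nonneg (abs_nonneg x) n
            linarith
  calc (1 + |x|) ^ n * |iteratedDeriv k (⇑φ) x|
      ≤ 2 ^ n * (1 + |x| ^ n) * |iteratedDeriv k (⇑φ) x| :=
        mul_le_mul_of_nonneg_right h1 habs
    _ = 2 ^ n * (|iteratedDeriv k (⇑φ) x| + |x| ^ n * |iteratedDeriv k (⇑φ) x|) := by ring
    _ ≤ 2 ^ n * (C0 + Cn) := by gcongr

lemma deriv_formula (γ : ℝ) (hγ : 0 < γ) (φ : SchwartzMap ℝ ℝ) (m : ℕ) :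
    ∃ c : ℕ → ℝ, (∀ k, m < k → c k = 0) ∧ ∀ t : ℝ, 0 < t → ∀ lam : ℝ, 0 < lam →
      iteratedDeriv m (fun u : ℝ => φ (u ^ (γ / 2) * t)) lam
        = ∑ k ∈ Finset.range (m + 1),
            c k * lam ^ (γ / 2 * k - m) * (t ^ k * iteratedDeriv k (⇑φ) (lam ^ (γ / 2) * t)) := by
  induction m with
  | zero =>
    refine ⟨fun k => if k = 0 then 1 else 0, fun k hk => if_neg (by omega),
      fun t ht lam hlam => ?_⟩
    simp [Real.rpow_zero]
  | succ m ih =>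
    obtain ⟨c, hc0, hc⟩ := ih
    refine ⟨fun k => (γ / 2 * k - m) * c k + γ / 2 * (if k = 0 then 0 else c (k - 1)),
      fun k hk => ?_, fun t ht lam hlam => ?_⟩
    · show (γ / 2 * k - m) * c k + γ / 2 * (if k = 0 then 0 else c (k - 1)) = 0
      rw [hc0 k (by omega), if_neg (show k ≠ 0 by omega), hc0 (k - 1) (by omega)]; ring
    · have hD : ∀ j : ℕ, ∀ x : ℝ, HasDerivAt (iteratedDeriv j (⇑φ))
          (iteratedDeriv (j + 1) (⇑φ) x) x := by
        intro j x
        have hd : Differentiable ℝ (iteratedDeriv j (⇑φ)) := by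
          apply (φ.smooth ⊤).differentiable_iteratedDeriv
          exact_mod_cast WithTop.coe_lt_top _
        have := hd.differentiableAt (x := x) |>.hasDerivAt
        rwa [iteratedDeriv_succ]
      set s₀ : ℝ := lam ^ (γ / 2) * t with hs₀
      have h2 : HasDerivAt (fun u : ℝ => u ^ (γ / 2) * t)
          (γ / 2 * lam ^ (γ / 2 - 1) * t) lam := by
        have := (Real.hasDerivAt_rpow_const (x := lam) (p := γ / 2)
          (Or.inl hlam.ne')).mul_const t
        exact this
      have hterm : ∀ k : ℕ, HasDerivAt
          (fun u : ℝ => c k * u ^ (γ / 2 * k - m) * (t ^ k * iteratedDeriv k (⇑φ) (u ^ (γ / 2) * t)))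
          (c k * ((γ / 2 * k - m) * lam ^ (γ / 2 * k - m - 1)) * (t ^ k * iteratedDeriv k (⇑φ) s₀)
            + c k * lam ^ (γ / 2 * k - m) *
              (t ^ k * (iteratedDeriv (k + 1) (⇑φ) s₀ * (γ / 2 * lam ^ (γ / 2 - 1) * t)))) lam := by
        intro k
        have h1 : HasDerivAt (fun u : ℝ => c k * u ^ (γ / 2 * k - m))
            (c k * ((γ / 2 * k - m) * lam ^ (γ / 2 * k - m - 1))) lam :=
          (Real.hasDerivAt_rpow_const (x := lam) (p := γ / 2 * k - m)
            (Or.inl hlam.ne')).const_mul (c k)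
        have h4 : HasDerivAt (fun u : ℝ => t ^ k * iteratedDeriv k (⇑φ) (u ^ (γ / 2) * t))
            (t ^ k * (iteratedDeriv (k + 1) (⇑φ) s₀ * (γ / 2 * lam ^ (γ / 2 - 1) * t))) lam := by
          exact ((hD k s₀).comp lam h2).const_mul (t ^ k)
        exact h1.mul h4
      have hsum : HasDerivAt (fun u : ℝ => ∑ k ∈ Finset.range (m + 1),
          c k * u ^ (γ / 2 * k - m) * (t ^ k * iteratedDeriv k (⇑φ) (u ^ (γ / 2) * t)))
          (∑ k ∈ Finset.range (m + 1),
            (c k * ((γ / 2 * k - m) * lam ^ (γ / 2 * k - m - 1)) * (t ^ k * iteratedDeriv k (⇑φ) s₀)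
            + c k * lam ^ (γ / 2 * k - m) *
              (t ^ k * (iteratedDeriv (k + 1) (⇑φ) s₀ * (γ / 2 * lam ^ (γ / 2 - 1) * t))))) lam :=
        HasDerivAt.fun_sum fun k _ => hterm k
      have hev : iteratedDeriv m (fun u : ℝ => φ (u ^ (γ / 2) * t)) =ᶠ[nhds lam]
          (fun u : ℝ => ∑ k ∈ Finset.range (m + 1),
            c k * u ^ (γ / 2 * k - m) * (t ^ k * iteratedDeriv k (⇑φ) (u ^ (γ / 2) * t))) := by
        filter_upwards [isOpen_Ioi.eventually_mem (show lam ∈ Set.Ioi (0:ℝ) from hlam)] with u hu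
        exact hc t ht u hu
      rw [iteratedDeriv_succ, hev.deriv_eq, hsum.deriv]
      -- now the algebraic sum identity
      rw [Finset.sum_add_distrib]
      have hA : ∀ k : ℕ,
          c k * ((γ / 2 * k - m) * lam ^ (γ / 2 * k - m - 1)) * (t ^ k * iteratedDeriv k (⇑φ) s₀)
          = (γ / 2 * k - m) * c k * lam ^ (γ / 2 * k - ((m + 1 : ℕ) : ℝ)) *
            (t ^ k * iteratedDeriv k (⇑φ) s₀) := by
        intro k
        rw [show γ / 2 * k - m - 1 = γ / 2 * k - ((m + 1 : ℕ) : ℝ) by push_cast; ring]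
        ring
      have hB : ∀ k : ℕ,
          c k * lam ^ (γ / 2 * k - m) *
            (t ^ k * (iteratedDeriv (k + 1) (⇑φ) s₀ * (γ / 2 * lam ^ (γ / 2 - 1) * t)))
          = γ / 2 * c k * lam ^ (γ / 2 * ((k + 1 : ℕ) : ℝ) - ((m + 1 : ℕ) : ℝ)) *
            (t ^ (k + 1) * iteratedDeriv (k + 1) (⇑φ) s₀) := by
        intro k
        rw [show γ / 2 * ((k + 1 : ℕ) : ℝ) - ((m + 1 : ℕ) : ℝ)
            = (γ / 2 * k - m) + (γ / 2 - 1) by push_cast; ring,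
          Real.rpow_add hlam]
        ring
      have hR : ∀ k ∈ Finset.range (m + 1 + 1),
          ((γ / 2 * k - m) * c k + γ / 2 * (if k = 0 then 0 else c (k - 1))) *
            lam ^ (γ / 2 * k - ((m + 1 : ℕ) : ℝ)) * (t ^ k * iteratedDeriv k (⇑φ) s₀)
          = (γ / 2 * k - m) * c k * lam ^ (γ / 2 * k - ((m + 1 : ℕ) : ℝ)) *
              (t ^ k * iteratedDeriv k (⇑φ) s₀)
            + γ / 2 * (if k = 0 then 0 else c (k - 1)) *
              lam ^ (γ / 2 * k - ((m + 1 : ℕ) : ℝ)) * (t ^ k * iteratedDeriv k (⇑φ) s₀) :=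
        fun k _ => by ring
      rw [Finset.sum_congr rfl hR, Finset.sum_add_distrib]
      congr 1
      · conv_rhs => rw [Finset.sum_range_succ]
        rw [hc0 (m + 1) (by omega)]
        simp only [mul_zero, zero_mul, add_zero]
        exact Finset.sum_congr rfl fun k _ => hA k
      · conv_rhs => rw [Finset.sum_range_succ']
        simp only [reduceIte, mul_zero, zero_mul, add_zero, Nat.add_sub_cancel,
          if_neg (Nat.succ_ne_zero _), Nat.cast_zero, zero_add]
        exact Finset.sum_congr rfl fun k _ => hB k

theorem stmt17 (γ : ℝ) (hγ : 0 < γ) (φ : SchwartzMap ℝ ℝ) :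
    ∀ l m : ℕ, ∃ C : ℝ, 0 < C ∧ ∀ lam : ℝ, 0 < lam → ∀ t : ℝ, 0 < t →
      (1 + t ^ (2 / γ) * lam) ^ l * lam ^ m *
        |iteratedDeriv m (fun u : ℝ => φ (u ^ (γ / 2) * t)) lam| ≤ C := by
  intro l m
  obtain ⟨c, hc0, hc⟩ := deriv_formula γ hγ φ m
  set p : ℕ := ⌈2 / γ⌉₊ + 1 with hp
  choose Cf hCfpos hCf using fun k => decayS φ (p * l + k) k
  refine ⟨∑ k ∈ Finset.range (m + 1), |c k| * (2 ^ l * Cf k) + 1, ?_, fun lam hlam t ht => ?_⟩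
  · have : (0:ℝ) ≤ ∑ k ∈ Finset.range (m + 1), |c k| * (2 ^ l * Cf k) :=
      Finset.sum_nonneg fun k _ =>
        mul_nonneg (abs_nonneg _) (mul_nonneg (by positivity) (hCfpos k).le)
    linarith
  · rw [hc t ht lam hlam]
    set s : ℝ := lam ^ (γ / 2) * t with hs
    have hspos : 0 < s := mul_pos (Real.rpow_pos_of_pos hlam _) ht
    have htlam : s ^ (2 / γ) = t ^ (2 / γ) * lam := by
      rw [hs, Real.mul_rpow (Real.rpow_nonneg hlam.le _) ht.le, ← Real.rpow_mul hlam.le,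
        show γ / 2 * (2 / γ) = 1 by field_simp, Real.rpow_one, mul_comm]
    rw [← htlam]
    have key2 : ∀ k : ℕ, lam ^ m * (lam ^ (γ / 2 * (k:ℝ) - m) * t ^ k) = s ^ k := by
      intro k
      have h1 : lam ^ m * lam ^ (γ / 2 * (k:ℝ) - m) = (lam ^ (γ / 2)) ^ k := by
        rw [← Real.rpow_natCast lam m, ← Real.rpow_add hlam,
          show (m:ℝ) + (γ / 2 * k - m) = γ / 2 * (k:ℝ) by ring, Real.rpow_mul hlam.le,
          Real.rpow_natCast]
      rw [← mul_assoc, h1, ← mul_pow, ← hs]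
    have hple : (2:ℝ) / γ ≤ (p:ℝ) := by
      have h1 := Nat.le_ceil (2 / γ)
      have h2 : ((⌈2 / γ⌉₊ : ℕ) : ℝ) ≤ (p : ℝ) := by exact_mod_cast Nat.le_succ _
      linarith
    have h1s : (1:ℝ) ≤ 1 + s := by linarith
    have hbound : ∀ k : ℕ,
        (1 + s ^ (2 / γ)) ^ l * (s ^ k * |iteratedDeriv k (⇑φ) s|) ≤ 2 ^ l * Cf k := by
      intro k
      have hs2 : s ^ (2 / γ) ≤ (1 + s) ^ p := by
        calc s ^ (2 / γ) ≤ (1 + s) ^ (2 / γ) :=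
              Real.rpow_le_rpow hspos.le (by linarith) (by positivity)
          _ ≤ (1 + s) ^ ((p:ℕ):ℝ) := Real.rpow_le_rpow_of_exponent_le h1s hple
          _ = (1 + s) ^ p := Real.rpow_natCast _ _
      have hrn : (0:ℝ) ≤ s ^ (2 / γ) := Real.rpow_nonneg hspos.le _
      have h2 : (1 + s ^ (2 / γ)) ^ l ≤ 2 ^ l * (1 + s) ^ (p * l) := by
        calc (1 + s ^ (2 / γ)) ^ l ≤ (2 * (1 + s) ^ p) ^ l := by
              apply pow_le_pow_left₀ (by linarith)
              have h3 : (1:ℝ) ≤ (1 + s) ^ p := one_le_pow₀ h1s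
              linarith
          _ = 2 ^ l * (1 + s) ^ (p * l) := by rw [mul_pow, ← pow_mul]
      calc (1 + s ^ (2 / γ)) ^ l * (s ^ k * |iteratedDeriv k (⇑φ) s|)
          ≤ (2 ^ l * (1 + s) ^ (p * l)) * ((1 + s) ^ k * |iteratedDeriv k (⇑φ) s|) := by
            apply mul_le_mul h2
              (mul_le_mul_of_nonneg_right (pow_le_pow_left₀ hspos.le (by linarith) k)
                (abs_nonneg _))
              (mul_nonneg (pow_nonneg hspos.le k) (abs_nonneg _)) (by positivity)
        _ = 2 ^ l * ((1 + |s|) ^ (p * l + k) * |iteratedDeriv k (⇑φ) s|) := by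
            rw [abs_of_pos hspos, pow_add]; ring
        _ ≤ 2 ^ l * Cf k := mul_le_mul_of_nonneg_left (hCf k s) (by positivity)
    have habs : |∑ k ∈ Finset.range (m + 1),
          c k * lam ^ (γ / 2 * (k:ℝ) - m) * (t ^ k * iteratedDeriv k (⇑φ) s)|
        ≤ ∑ k ∈ Finset.range (m + 1),
          |c k| * lam ^ (γ / 2 * (k:ℝ) - m) * (t ^ k * |iteratedDeriv k (⇑φ) s|) := by
      refine (Finset.abs_sum_le_sum_abs _ _).trans (le_of_eq (Finset.sum_congr rfl fun k _ => ?_))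
      rw [abs_mul, abs_mul, abs_mul, abs_of_pos (Real.rpow_pos_of_pos hlam _),
        abs_of_pos (pow_pos ht k)]
    have hnn : (0:ℝ) ≤ (1 + s ^ (2 / γ)) ^ l * lam ^ m := by
      apply mul_nonneg _ (pow_nonneg hlam.le m)
      apply pow_nonneg
      have := Real.rpow_nonneg hspos.le (2 / γ)
      linarith
    calc (1 + s ^ (2 / γ)) ^ l * lam ^ m * |∑ k ∈ Finset.range (m + 1),
            c k * lam ^ (γ / 2 * (k:ℝ) - m) * (t ^ k * iteratedDeriv k (⇑φ) s)|
        ≤ (1 + s ^ (2 / γ)) ^ l * lam ^ m * ∑ k ∈ Finset.range (m + 1),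
            |c k| * lam ^ (γ / 2 * (k:ℝ) - m) * (t ^ k * |iteratedDeriv k (⇑φ) s|) :=
          mul_le_mul_of_nonneg_left habs hnn
      _ = ∑ k ∈ Finset.range (m + 1),
            |c k| * ((1 + s ^ (2 / γ)) ^ l * (s ^ k * |iteratedDeriv k (⇑φ) s|)) := by
          rw [Finset.mul_sum]
          refine Finset.sum_congr rfl fun k _ => ?_
          rw [show (1 + s ^ (2 / γ)) ^ l * lam ^ m *
                (|c k| * lam ^ (γ / 2 * (k:ℝ) - m) * (t ^ k * |iteratedDeriv k (⇑φ) s|))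
              = |c k| * ((1 + s ^ (2 / γ)) ^ l *
                ((lam ^ m * (lam ^ (γ / 2 * (k:ℝ) - m) * t ^ k)) * |iteratedDeriv k (⇑φ) s|))
            by ring, key2 k]
      _ ≤ ∑ k ∈ Finset.range (m + 1), |c k| * (2 ^ l * Cf k) :=
          Finset.sum_le_sum fun k _ => mul_le_mul_of_nonneg_left (hbound k) (abs_nonneg _)
      _ ≤ ∑ k ∈ Finset.range (m + 1), |c k| * (2 ^ l * Cf k) + 1 := by linarith
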